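/- In the braid group B_{r+1}, set λ = σ_1^{2e} · (A t_e)(A t_{e-1}) ⋯ (A t_1), where A = σ_r ⋯ σ_3 and t_i = σ_1^{-2i} σ_2 σ_1^{2i}. Then λ = ε^e, where ε = σ_r ⋯ σ_2 σ_1². Consequently λ^{r/gcd(e,r)} = (Δ²)^{e/gcd(e,r)}, using that ε^r = Δ². -/

import Mathlib

/-- `descProd σ a b = σ b * σ (b-1) * ⋯ * σ a` (equals `1` if `b < a`). -/
def descProd {M : Type*} [Monoid M] (σ : ℕ → M) (a b : ℕ) : M :=
  (((List.range' a (b + 1 - a)).reverse).map σ).prod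

namespace Stmt14Aux

lemma range'_succ_left (a n : ℕ) : List.range' (a+1) n = (List.range' a n).map (· + 1) := by
  induction n generalizing a with
  | zero => simp
  | succ n ih => simp [List.range'_succ, ih]

variable {M : Type*} [Group M] (σ : ℕ → M)

lemma descProd_of_lt {a b : ℕ} (h : b < a) : descProd σ a b = 1 := by
  unfold descProd
  have : b + 1 - a = 0 := by omega
  simp [this]

lemma descProd_succ {a b : ℕ} (h : a ≤ b + 1) :
    descProd σ a (b + 1) = σ (b + 1) * descProd σ a b := by
  unfold descProd
  have h1 : b + 1 + 1 - a = (b + 1 - a) + 1 := by omega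
  have h2 : a + 1 * (b + 1 - a) = b + 1 := by omega
  rw [h1, List.range'_concat, h2]
  simp

lemma descProd_self (a : ℕ) : descProd σ a a = σ a := by
  unfold descProd
  have : a + 1 - a = 1 := by omega
  simp [this]

lemma descProd_split {a c b : ℕ} (hac : a ≤ c + 1) (hcb : c ≤ b) :
    descProd σ a b = descProd σ (c + 1) b * descProd σ a c := by
  induction b, hcb using Nat.le_induction with
  | base => rw [descProd_of_lt σ (by omega : c < c + 1), one_mul]
  | succ b hb ih =>
    rw [descProd_succ σ (by omega : a ≤ b + 1), ih,
      descProd_succ σ (by omega : c + 1 ≤ b + 1), mul_assoc]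

variable {r : ℕ}
  (hcomm : ∀ i j : ℕ, 1 ≤ i → i + 1 < j → j ≤ r → σ i * σ j = σ j * σ i)
  (hbraid : ∀ i : ℕ, 1 ≤ i → i + 1 ≤ r →
      σ i * σ (i + 1) * σ i = σ (i + 1) * σ i * σ (i + 1))

include hcomm in
lemma comm_left {i a b : ℕ} (hi : 1 ≤ i) (hia : i + 1 < a) (hb : b ≤ r) :
    σ i * descProd σ a b = descProd σ a b * σ i := by
  induction b with
  | zero => rw [descProd_of_lt σ (by omega : 0 < a)]; rw [one_mul, mul_one]
  | succ b ih =>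
    by_cases h : b + 1 < a
    · rw [descProd_of_lt σ h, one_mul, mul_one]
    · rw [descProd_succ σ (by omega), ← mul_assoc,
        hcomm i (b+1) hi (by omega) hb, mul_assoc, ih (by omega), mul_assoc]

include hcomm in
lemma comm_right {j a b : ℕ} (ha : 1 ≤ a) (hbj : b + 1 < j) (hj : j ≤ r) :
    σ j * descProd σ a b = descProd σ a b * σ j := by
  induction b with
  | zero => rw [descProd_of_lt σ (by omega : 0 < a), one_mul, mul_one]
  | succ b ih =>
    by_cases h : b + 1 < a
    · rw [descProd_of_lt σ h, one_mul, mul_one]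
    · rw [descProd_succ σ (by omega), ← mul_assoc,
        ← hcomm (b+1) j (by omega) (by omega) hj, mul_assoc, ih (by omega), mul_assoc]

include hcomm hbraid in
lemma shift {a m i : ℕ} (ha : 1 ≤ a) (hm : m ≤ r) (hai : a ≤ i) (him : i < m) :
    σ i * descProd σ a m = descProd σ a m * σ (i + 1) := by
  obtain ⟨i', rfl⟩ : ∃ i', i = i' + 1 := ⟨i - 1, by omega⟩
  have hD : descProd σ a m
      = descProd σ (i'+3) m * (σ (i'+2) * (σ (i'+1) * descProd σ a i')) := by
    rw [descProd_split σ (by omega : a ≤ i' + 2 + 1) (by omega : i' + 2 ≤ m),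
      descProd_succ σ (by omega : a ≤ i' + 1 + 1),
      descProd_succ σ (by omega : a ≤ i' + 1)]
  have e1 : σ (i'+1) * descProd σ (i'+3) m = descProd σ (i'+3) m * σ (i'+1) :=
    comm_left σ hcomm (by omega) (by omega) hm
  have e2 : σ (i'+1) * σ (i'+2) * σ (i'+1) = σ (i'+2) * σ (i'+1) * σ (i'+2) :=
    hbraid (i'+1) (by omega) (by omega)
  have e3 : σ (i'+2) * descProd σ a i' = descProd σ a i' * σ (i'+2) :=
    comm_right σ hcomm ha (by omega) (by omega)
  rw [hD]
  calc σ (i'+1) * (descProd σ (i'+3) m * (σ (i'+2) * (σ (i'+1) * descProd σ a i')))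
      = descProd σ (i'+3) m * (σ (i'+1) * σ (i'+2) * σ (i'+1) * descProd σ a i') := by
        rw [← mul_assoc, e1]; simp only [mul_assoc]
    _ = descProd σ (i'+3) m * (σ (i'+2) * σ (i'+1) * σ (i'+2) * descProd σ a i') := by
        rw [e2]
    _ = descProd σ (i'+3) m * (σ (i'+2) * (σ (i'+1) * descProd σ a i')) * σ (i'+2) := by
        simp only [mul_assoc, e3]

include hcomm hbraid in
lemma shiftProd {a c b m : ℕ} (ha : 1 ≤ a) (hac : a ≤ c) (hm : m ≤ r) (hb : b < m) :
    descProd σ c b * descProd σ a m = descProd σ a m * descProd σ (c+1) (b+1) := by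
  induction b with
  | zero =>
    rw [descProd_of_lt σ (by omega : 0 < c), descProd_of_lt σ (by omega : 1 < c + 1),
      one_mul, mul_one]
  | succ b ih =>
    by_cases h : b + 1 < c
    · rw [descProd_of_lt σ h, descProd_of_lt σ (by omega : b + 1 + 1 < c + 1),
        one_mul, mul_one]
    · rw [descProd_succ σ (by omega : c ≤ b + 1), mul_assoc, ih (by omega),
        ← mul_assoc, shift σ hcomm hbraid ha hm (by omega) hb, mul_assoc,
        descProd_succ σ (by omega : c + 1 ≤ b + 1 + 1)]

lemma prod_move {d : M} {g h : ℕ → M} :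
    ∀ l : List ℕ, (∀ j ∈ l, g j * d = d * h j) →
    (l.map g).prod * d = d * (l.map h).prod
  | [], _ => by simp
  | j :: l, H => by
    simp only [List.map_cons, List.prod_cons, mul_assoc]
    rw [prod_move l (fun x hx => H x (List.mem_cons_of_mem _ hx)), ← mul_assoc,
      H j List.mem_cons_self, mul_assoc]

include hcomm hbraid in
lemma Hlem : ∀ n a : ℕ, a + n = r + 1 → 1 ≤ a →
    ((List.range' a n).map (fun m => descProd σ a m)).prod
      = ((List.range' a n).map (fun c => descProd σ c r)).prod := by
  intro n
  induction n with
  | zero => simp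
  | succ n ih =>
    intro a han ha
    have harg : a + 1 * n = r := by omega
    have lhs_eq : ((List.range' a (n+1)).map (fun m => descProd σ a m)).prod
        = descProd σ a r * ((List.range' (a+1) n).map (fun m => descProd σ (a+1) m)).prod := by
      rw [List.range'_concat, harg, List.map_append, List.prod_append]
      simp only [List.map_cons, List.map_nil, List.prod_cons, List.prod_nil, mul_one]
      rw [prod_move (h := fun j => descProd σ (a+1) (j+1)) _ (fun j hj => by
        have hjm := List.mem_range'_1.mp hj
        exact shiftProd σ hcomm hbraid ha le_rfl le_rfl (by omega))]
      congr 1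
      rw [range'_succ_left, List.map_map]
      rfl
    have rhs_eq : ((List.range' a (n+1)).map (fun c => descProd σ c r)).prod
        = descProd σ a r * ((List.range' (a+1) n).map (fun c => descProd σ c r)).prod := by
      rw [List.range'_succ]
      simp
    rw [lhs_eq, rhs_eq, ih (a+1) (by omega) (by omega)]

include hcomm hbraid in
lemma deltaPow : ∀ k, k ≤ r →
    (descProd σ 1 r)^(k+1)
      = ((List.range' 1 (k+1)).map (fun c => descProd σ c r)).prod
        * ((List.range' 1 k).map (fun m => descProd σ 1 m)).prod := by
  intro k
  induction k with
  | zero => intro _; simp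
  | succ k ih =>
    intro hk1
    have hS : ((List.range' 1 k).map (fun m => descProd σ 1 m)).prod * descProd σ 1 r
        = descProd σ 1 r * ((List.range' 1 k).map (fun j => descProd σ 2 (j+1))).prod := by
      refine prod_move _ (fun j hj => ?_)
      have hjm := List.mem_range'_1.mp hj
      exact shiftProd σ hcomm hbraid le_rfl le_rfl le_rfl (by omega)
    have hδsplit : descProd σ 1 r = descProd σ (k+2) r * descProd σ 1 (k+1) :=
      descProd_split σ (by omega) (by omega)
    have hR : ((List.range' 1 (k+2)).map (fun c => descProd σ c r)).prod
        = ((List.range' 1 (k+1)).map (fun c => descProd σ c r)).prod * descProd σ (k+2) r := by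
      have harg : 1 + 1 * (k+1) = k + 2 := by omega
      rw [List.range'_concat, harg, List.map_append, List.prod_append]
      simp
    have hΔstep : ((List.range' 1 (k+1)).map (fun m => descProd σ 1 m)).prod
        = descProd σ 1 (k+1) * ((List.range' 1 k).map (fun j => descProd σ 2 (j+1))).prod := by
      have harg : 1 + 1 * k = k + 1 := by omega
      rw [List.range'_concat, harg, List.map_append, List.prod_append]
      simp only [List.map_cons, List.map_nil, List.prod_cons, List.prod_nil, mul_one]
      refine prod_move _ (fun j hj => ?_)
      have hjm := List.mem_range'_1.mp hj
      exact shiftProd σ hcomm hbraid le_rfl le_rfl (by omega : k + 1 ≤ r) (by omega)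
    rw [pow_succ, ih (by omega), hR, hΔstep]
    rw [mul_assoc, hS, hδsplit]
    simp only [mul_assoc]

include hcomm hbraid in
lemma epsPow (hr1 : 1 ≤ r) : ∀ k, k ≤ r →
    (descProd σ 2 r * σ 1 ^ 2)^k = (descProd σ 1 r)^k * descProd σ 1 k := by
  have hεδ : descProd σ 2 r * σ 1 ^ 2 = descProd σ 1 r * σ 1 := by
    rw [descProd_split σ (show (1:ℕ) ≤ 1 + 1 by omega) hr1, descProd_self, sq, mul_assoc]
  intro k; induction k with
  | zero => simp [descProd_of_lt σ (by omega : 0 < 1)]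
  | succ k ih =>
    intro hk1
    rw [pow_succ, ih (by omega), hεδ]
    have h1 : descProd σ 1 k * descProd σ 1 r = descProd σ 1 r * descProd σ 2 (k+1) :=
      shiftProd σ hcomm hbraid le_rfl le_rfl le_rfl (by omega)
    have h2 : descProd σ 2 (k+1) * σ 1 = descProd σ 1 (k+1) := by
      rw [descProd_split σ (show (1:ℕ) ≤ 2 by omega) (by omega : 1 ≤ k+1), descProd_self]
    simp only [← mul_assoc]
    rw [mul_assoc ((descProd σ 1 r)^k), h1, ← mul_assoc, ← pow_succ, mul_assoc, h2]

include hcomm hbraid in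
lemma eps_pow_full (hr1 : 1 ≤ r) :
    (descProd σ 2 r * σ 1 ^ 2)^r
      = ((List.range' 1 r).map (fun m => descProd σ 1 m)).prod
        * ((List.range' 1 r).map (fun m => descProd σ 1 m)).prod := by
  rw [epsPow σ hcomm hbraid hr1 r le_rfl, ← pow_succ,
    deltaPow σ hcomm hbraid r le_rfl]
  have hR : ((List.range' 1 (r+1)).map (fun c => descProd σ c r)).prod
      = ((List.range' 1 r).map (fun c => descProd σ c r)).prod := by
    have harg : 1 + 1 * r = r + 1 := by omega
    rw [List.range'_concat, harg, List.map_append, List.prod_append]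
    simp [descProd_of_lt σ (by omega : r < r + 1)]
  rw [hR, ← Hlem σ hcomm hbraid r 1 (by omega) le_rfl]

end Stmt14Aux

/-- In the braid group `B_{r+1}` (any group with braid relations), set
`lam = σ 1 ^ (2e) * (A * t e) * (A * t (e-1)) * ⋯ * (A * t 1)`.  Then `lam = ε ^ e`,
and consequently `lam ^ (r / gcd e r) = (Δ ^ 2) ^ (e / gcd e r)`. -/
theorem stmt14 {M : Type*} [Group M] (r e : ℕ) (hr : 2 ≤ r) (he : 1 ≤ e) (σ : ℕ → M)
    (hcomm : ∀ i j : ℕ, 1 ≤ i → i + 1 < j → j ≤ r → σ i * σ j = σ j * σ i)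
    (hbraid : ∀ i : ℕ, 1 ≤ i → i + 1 ≤ r →
      σ i * σ (i + 1) * σ i = σ (i + 1) * σ i * σ (i + 1))
    (A ε Δ : M) (hA : A = descProd σ 3 r) (hε : ε = descProd σ 2 r * σ 1 ^ 2)
    (hΔ : Δ = ((List.range r).map (fun k => descProd σ 1 (k + 1))).prod)
    (t : ℤ → M) (ht : ∀ i : ℤ, t i = σ 1 ^ (-(2 * i)) * σ 2 * σ 1 ^ (2 * i))
    (P : ℕ → M) (hP0 : P 0 = 1)
    (hPsucc : ∀ k : ℕ, P (k + 1) = A * t (k + 1) * P k)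
    (lam : M) (hlam : lam = σ 1 ^ (2 * e) * P e) :
    lam = ε ^ e ∧ lam ^ (r / Nat.gcd e r) = (Δ ^ 2) ^ (e / Nat.gcd e r) := by
  open Stmt14Aux in
  have hA2 : descProd σ 2 r = descProd σ 3 r * σ 2 := by
    rw [descProd_split σ (show (2:ℕ) ≤ 2 + 1 by omega) hr, descProd_self]
  have c1 : Commute (σ 1) (descProd σ 3 r) :=
    comm_left σ hcomm le_rfl (by omega) le_rfl
  -- Part 1 : σ 1 ^ (2k) * P k = ε ^ k
  have key : ∀ k : ℕ, σ 1 ^ (2 * k) * P k = ε ^ k := by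
    intro k; induction k with
    | zero => simp [hP0]
    | succ k ih =>
      rw [hPsucc, ht, hA]
      have hz : (σ 1 : M) ^ (2 * (k + 1)) = σ 1 ^ ((2 * ((k:ℤ) + 1))) := by
        rw [← zpow_natCast]; push_cast; ring_nf
      have hzz : (σ 1 : M) ^ ((2 * ((k:ℤ) + 1))) * σ 1 ^ (-(2 * ((k:ℤ) + 1))) = 1 := by
        rw [← zpow_add]; simp
      have hsplit2 : (σ 1 : M) ^ ((2 * ((k:ℤ) + 1))) = σ 1 ^ 2 * σ 1 ^ (2 * k) := by
        rw [← hz, show 2 * (k + 1) = 2 + 2 * k by ring, pow_add]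
      simp only [← mul_assoc]
      rw [hz, ((c1.zpow_left _).eq : σ 1 ^ ((2 * ((k:ℤ) + 1))) * descProd σ 3 r = _),
        mul_assoc (descProd σ 3 r), hzz, mul_one]
      rw [mul_assoc (descProd σ 3 r * σ 2), hsplit2]
      rw [mul_assoc (σ 1 ^ 2), ih]
      rw [pow_succ' ε, hε, hA2]
      simp only [mul_assoc]
  have part1 : lam = ε ^ e := by rw [hlam, key]
  refine ⟨part1, ?_⟩
  -- ε ^ r = Δ ^ 2
  have hΔ' : Δ = ((List.range' 1 r).map (fun m => descProd σ 1 m)).prod := by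
    rw [hΔ, List.range_eq_range',
      show List.range' 1 r = (List.range' 0 r).map (· + 1) from range'_succ_left 0 r,
      List.map_map]
    rfl
  have hfull : ε ^ r = Δ ^ 2 := by
    rw [hε, eps_pow_full σ hcomm hbraid (by omega), hΔ', sq]
  -- arithmetic
  set g := Nat.gcd e r with hg
  have hge : g ∣ e := Nat.gcd_dvd_left _ _
  have hgr : g ∣ r := Nat.gcd_dvd_right _ _
  have harith : e * (r / g) = r * (e / g) := by
    calc e * (r / g) = g * (e / g) * (r / g) := by rw [Nat.mul_div_cancel' hge]
      _ = (e / g) * (g * (r / g)) := by ring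
      _ = (e / g) * r := by rw [Nat.mul_div_cancel' hgr]
      _ = r * (e / g) := mul_comm _ _
  rw [part1, ← hfull, ← pow_mul, ← pow_mul, harith]
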